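/- arXiv:1112.4911 — 5 statements merged into one kernel-verified Lean document; each statement's English description precedes it below -/
import Mathlib

section
/- For every real x > 0, the sum over n ≥ 1 of λ(n)/(e^{nπx} − 1) equals the sum over k ≥ 1 of e^{−k²πx}. -/
open Real

/-- The Liouville function `λ(n) = (-1)^Ω(n)`. -/
def liouville (n : ℕ) : ℤ := (-1) ^ n.primeFactorsList.length

lemma liouville_mul {m n : ℕ} (hm : m ≠ 0) (hn : n ≠ 0) :
    liouville (m * n) = liouville m * liouville n := by
  unfold liouville
  rw [← pow_add]
  congr 1
  rw [(Nat.perm_primeFactorsList_mul hm hn).length_eq, List.length_append]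

lemma liouville_prime_pow {p : ℕ} (hp : p.Prime) (k : ℕ) :
    liouville (p ^ k) = (-1) ^ k := by
  unfold liouville
  rw [hp.primeFactorsList_pow, List.length_replicate]

lemma Nat.isSquare_iff_even_factorization {n : ℕ} (hn : n ≠ 0) :
    IsSquare n ↔ ∀ p, Even (n.factorization p) := by
  constructor
  · rintro ⟨r, rfl⟩ p
    have hr : r ≠ 0 := by rintro rfl; simp at hn
    rw [Nat.factorization_mul hr hr]
    simp only [Finsupp.add_apply]
    exact ⟨_, rfl⟩
  · intro h
    refine ⟨n.factorization.prod fun p e => p ^ (e / 2), ?_⟩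
    conv_lhs => rw [← Nat.factorization_prod_pow_eq_self hn]
    rw [Finsupp.prod, Finsupp.prod, ← Finset.prod_mul_distrib]
    refine Finset.prod_congr rfl fun p _ => ?_
    rw [← pow_add]
    congr 1
    obtain ⟨c, hc⟩ := h p
    omega

lemma isSquare_prime_pow_iff {p : ℕ} (hp : p.Prime) (k : ℕ) :
    IsSquare (p ^ k) ↔ Even k := by
  constructor
  · intro h
    have := (Nat.isSquare_iff_even_factorization (pow_ne_zero k hp.ne_zero)).mp h p
    rwa [hp.factorization_pow, Finsupp.single_eq_same] at this
  · intro h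
    exact h.isSquare_pow p

lemma isSquare_mul_of_coprime {m n : ℕ} (hm : m ≠ 0) (hn : n ≠ 0) (h : Nat.Coprime m n) :
    IsSquare (m * n) ↔ IsSquare m ∧ IsSquare n := by
  rw [Nat.isSquare_iff_even_factorization (mul_ne_zero hm hn),
    Nat.isSquare_iff_even_factorization hm, Nat.isSquare_iff_even_factorization hn]
  have key : ∀ p : ℕ, m.factorization p = 0 ∨ n.factorization p = 0 := by
    intro p
    by_contra hc
    push_neg at hc
    have h1 : p ∣ m := Nat.dvd_of_factorization_pos hc.1
    have h2 : p ∣ n := Nat.dvd_of_factorization_pos hc.2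
    have hpp : p.Prime := Nat.prime_of_mem_primeFactors
      ((Nat.support_factorization m) ▸ Finsupp.mem_support_iff.mpr hc.1)
    exact hpp.one_lt.ne' (Nat.eq_one_of_dvd_one (h ▸ Nat.dvd_gcd h1 h2))
  constructor
  · intro hall
    constructor <;> intro p <;> have hh := hall p <;>
      rw [Nat.factorization_mul hm hn, Finsupp.add_apply] at hh <;>
      rcases key p with h0 | h0 <;> rw [h0] at hh <;>
      first
        | exact h0 ▸ Even.zero
        | simpa using hh
  · rintro ⟨h1, h2⟩ p
    rw [Nat.factorization_mul hm hn, Finsupp.add_apply]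
    exact (h1 p).add (h2 p)

open ArithmeticFunction in
noncomputable def liouvilleAF : ArithmeticFunction ℤ :=
  ⟨fun n => if n = 0 then 0 else _root_.liouville n, by simp⟩

lemma liouvilleAF_apply {n : ℕ} (hn : n ≠ 0) : liouvilleAF n = liouville n := by
  simp [liouvilleAF, hn, ArithmeticFunction.coe_mk]

lemma liouvilleAF_isMultiplicative : liouvilleAF.IsMultiplicative := by
  constructor
  · rw [liouvilleAF_apply one_ne_zero]
    simp [liouville]
  · intro m n h
    rcases eq_or_ne m 0 with rfl | hm
    · rcases Nat.coprime_zero_left n |>.mp h with rfl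
      simp
    rcases eq_or_ne n 0 with rfl | hn
    · rcases Nat.coprime_zero_right m |>.mp h with rfl
      simp
    rw [liouvilleAF_apply (mul_ne_zero hm hn), liouvilleAF_apply hm, liouvilleAF_apply hn,
      liouville_mul hm hn]

noncomputable def squareAF : ArithmeticFunction ℤ :=
  ⟨fun n => if IsSquare n ∧ n ≠ 0 then 1 else 0, by simp⟩

lemma squareAF_apply {n : ℕ} (hn : n ≠ 0) :
    squareAF n = if IsSquare n then 1 else 0 := by
  simp [squareAF, hn, ArithmeticFunction.coe_mk]

lemma squareAF_isMultiplicative : squareAF.IsMultiplicative := by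
  constructor
  · rw [squareAF_apply one_ne_zero]
    simp
  · intro m n h
    rcases eq_or_ne m 0 with rfl | hm
    · rcases Nat.coprime_zero_left n |>.mp h with rfl
      simp [squareAF, ArithmeticFunction.coe_mk]
    rcases eq_or_ne n 0 with rfl | hn
    · rcases Nat.coprime_zero_right m |>.mp h with rfl
      simp [squareAF, ArithmeticFunction.coe_mk]
    rw [squareAF_apply (mul_ne_zero hm hn), squareAF_apply hm, squareAF_apply hn,
      ]
    simp only [isSquare_mul_of_coprime hm hn h]
    by_cases h1 : IsSquare m <;> by_cases h2 : IsSquare n <;> simp [h1, h2]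

open ArithmeticFunction ArithmeticFunction.zeta in
lemma zeta_mul_liouvilleAF : (↑ζ * liouvilleAF : ArithmeticFunction ℤ) = squareAF := by
  rw [ArithmeticFunction.IsMultiplicative.eq_iff_eq_on_prime_powers _ (isMultiplicative_zeta.natCast.mul liouvilleAF_isMultiplicative)
    _ squareAF_isMultiplicative]
  intro p i hp
  rw [coe_zeta_mul_apply, Nat.sum_divisors_prime_pow hp,
    squareAF_apply (pow_ne_zero i hp.ne_zero)]
  simp only [isSquare_prime_pow_iff hp]
  have : ∀ j ∈ Finset.range (i + 1), liouvilleAF (p ^ j) = (-1 : ℤ) ^ j := fun j _ => by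
    rw [liouvilleAF_apply (pow_ne_zero j hp.ne_zero), liouville_prime_pow hp]
  rw [Finset.sum_congr rfl this, neg_one_geom_sum]
  rcases Nat.even_or_odd i with h | h
  · simp [h, Nat.even_add_one, Nat.not_odd_iff_even.mpr h]
  · simp [Nat.even_add_one, Nat.not_even_iff_odd.mpr h]

lemma sum_liouville_divisorsAntidiagonal {N : ℕ} (hN : N ≠ 0) :
    ∑ p ∈ N.divisorsAntidiagonal, (liouville p.1 : ℤ) =
      if IsSquare N then 1 else 0 := by
  have h1 : ∑ p ∈ N.divisorsAntidiagonal, (liouville p.1 : ℤ)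
      = ∑ d ∈ N.divisors, liouville d := by
    rw [← Nat.map_div_right_divisors, Finset.sum_map]
    rfl
  have h2 : ∑ d ∈ N.divisors, (liouville d : ℤ) = (↑ArithmeticFunction.zeta * liouvilleAF) N := by
    rw [ArithmeticFunction.coe_zeta_mul_apply]
    refine Finset.sum_congr rfl fun d hd => ?_
    rw [liouvilleAF_apply (Nat.pos_of_mem_divisors hd).ne']
  rw [h1, h2, zeta_mul_liouvilleAF, squareAF_apply hN]

theorem liouville_theta_sum (x : ℝ) (hx : 0 < x) :
    ∑' n : ℕ, (liouville (n + 1) : ℝ) / (Real.exp (((n : ℝ) + 1) * π * x) - 1) =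
      ∑' k : ℕ, Real.exp (-((k : ℝ) + 1) ^ 2 * π * x) := by
  have hπx : 0 < π * x := mul_pos pi_pos hx
  set q : ℝ := Real.exp (-(π * x)) with hq_def
  have hq0 : 0 < q := Real.exp_pos _
  have hq1 : q < 1 := Real.exp_lt_one_iff.mpr (by linarith)
  -- the double-sum function
  set F : ℕ × ℕ → ℝ := fun p =>
    if p.1 = 0 ∨ p.2 = 0 then 0 else (liouville p.1 : ℝ) * q ^ (p.1 * p.2) with hF_def
  -- summability of F
  have habs : ∀ p : ℕ × ℕ, |F p| ≤ (q ^ p.1 * q ^ p.2) * q⁻¹ := by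
    rintro ⟨a, b⟩
    rcases eq_or_ne a 0 with rfl | ha
    · simp [hF_def]
      positivity
    rcases eq_or_ne b 0 with rfl | hb
    · simp [hF_def]
      positivity
    have h1 : F (a, b) = (liouville a : ℝ) * q ^ (a * b) := by simp [hF_def, ha, hb]
    have h2 : |(liouville a : ℝ)| = 1 := by
      have : (liouville a : ℝ) = (-1) ^ a.primeFactorsList.length := by
        simp [liouville]
      rw [this, abs_pow, abs_neg, abs_one, one_pow]
    rw [h1, abs_mul, h2, one_mul, abs_of_nonneg (by positivity)]
    rw [← pow_add, ← div_eq_mul_inv, le_div_iff₀ hq0, ← pow_succ]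
    apply pow_le_pow_of_le_one hq0.le hq1.le
    nlinarith [Nat.one_le_iff_ne_zero.mpr ha, Nat.one_le_iff_ne_zero.mpr hb]
  have hFs : Summable F := by
    apply Summable.of_abs
    apply Summable.of_nonneg_of_le (fun p => abs_nonneg _) habs
    exact ((summable_geometric_of_lt_one hq0.le hq1).mul_of_nonneg
      (summable_geometric_of_lt_one hq0.le hq1) (fun n => by positivity)
      (fun n => by positivity)).mul_right q⁻¹
  -- the slice sums
  have hslice : ∀ n : ℕ,
      ∑' m : ℕ, F (n + 1, m) =
        (liouville (n + 1) : ℝ) / (Real.exp (((n : ℝ) + 1) * π * x) - 1) := by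
    intro n
    set r : ℝ := q ^ (n + 1) with hr_def
    have hr0 : 0 < r := by positivity
    have hr1 : r < 1 := pow_lt_one₀ hq0.le hq1 (Nat.succ_ne_zero n)
    have hexp : Real.exp (((n : ℝ) + 1) * π * x) = r⁻¹ := by
      rw [hr_def, hq_def, ← Real.exp_nat_mul, ← Real.exp_neg]
      push_cast
      ring_nf
    have hsum : Summable fun m : ℕ => F (n + 1, m) := hFs.prod_factor _
    rw [hsum.tsum_eq_zero_add]
    have hF0 : F (n + 1, 0) = 0 := by simp [hF_def]
    have hFm : ∀ m : ℕ, F (n + 1, m + 1) = (liouville (n + 1) : ℝ) * (r ^ (m + 1)) := by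
      intro m
      simp only [hF_def, Nat.succ_ne_zero, or_self, if_false, hr_def, ← pow_mul]
    rw [hF0, zero_add]
    calc ∑' m : ℕ, F (n + 1, m + 1)
        = ∑' m : ℕ, (liouville (n + 1) : ℝ) * r * r ^ m := by
          refine tsum_congr fun m => ?_
          rw [hFm m, pow_succ]
          ring
      _ = (liouville (n + 1) : ℝ) * r * (1 - r)⁻¹ := by
          rw [tsum_mul_left]
          rw [tsum_geometric_of_lt_one hr0.le hr1]
      _ = (liouville (n + 1) : ℝ) / (Real.exp (((n : ℝ) + 1) * π * x) - 1) := by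
          rw [hexp]
          have h1r : (1 : ℝ) - r ≠ 0 := by linarith
          have hinv : r⁻¹ - 1 = (1 - r) / r := by field_simp
          rw [hinv, div_div_eq_mul_div, div_eq_mul_inv]
  -- fiberwise sums
  set φ : ℕ × ℕ → ℕ := fun p => p.1 * p.2 with hφ_def
  set W : ℕ → ℝ := fun N => if IsSquare N ∧ N ≠ 0 then q ^ N else 0 with hW_def
  have hfib : ∀ N : ℕ, ∑' (p : φ ⁻¹' {N}), F p = W N := by
    intro N
    rcases eq_or_ne N 0 with rfl | hN
    · have h0 : ∀ p : φ ⁻¹' {(0 : ℕ)}, F p = 0 := by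
        rintro ⟨⟨a, b⟩, hp⟩
        have hab : a * b = 0 := hp
        rcases Nat.mul_eq_zero.mp hab with h | h <;> simp [hF_def, h]
      simp only [h0, tsum_zero]
      simp [hW_def]
    · have hset : φ ⁻¹' {N} = ↑(N.divisorsAntidiagonal) := by
        ext p
        simp [hφ_def, Nat.mem_divisorsAntidiagonal, hN]
      rw [hset, Finset.tsum_subtype']
      have hterm : ∀ p ∈ N.divisorsAntidiagonal, F p = (liouville p.1 : ℝ) * q ^ N := by
        intro p hp
        obtain ⟨h1, h2⟩ := Nat.ne_zero_of_mem_divisorsAntidiagonal hp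
        have hpn : p.1 * p.2 = N := (Nat.mem_divisorsAntidiagonal.mp hp).1
        simp [hF_def, h1, h2, hpn]
      rw [Finset.sum_congr rfl hterm, ← Finset.sum_mul]
      have hz : (∑ p ∈ N.divisorsAntidiagonal, (liouville p.1 : ℝ))
          = if IsSquare N then 1 else 0 := by
        rw [← Int.cast_sum, sum_liouville_divisorsAntidiagonal hN]
        split_ifs <;> simp
      rw [hz]
      by_cases hsq : IsSquare N <;> simp [hW_def, hsq, hN]
  have hTot : ∑' N : ℕ, W N = ∑' p : ℕ × ℕ, F p := by
    rw [← tsum_congr hfib]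
    exact (hFs.hasSum.tsum_fiberwise φ).tsum_eq
  -- LHS equals the double sum
  have hL : ∑' n : ℕ, (liouville (n + 1) : ℝ) / (Real.exp (((n : ℝ) + 1) * π * x) - 1)
      = ∑' p : ℕ × ℕ, F p := by
    rw [hFs.tsum_prod' fun n => hFs.prod_factor n]
    have hg0 : ∑' m : ℕ, F (0, m) = 0 := by
      have : ∀ m : ℕ, F (0, m) = 0 := fun m => by simp [hF_def]
      simp [this]
    rw [← Function.Injective.tsum_eq Nat.succ_injective
      (f := fun n => ∑' m : ℕ, F (n, m)) ?_]
    · exact tsum_congr fun n => (hslice n).symm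
    · intro n hn
      rcases n with _ | n
      · exact absurd hg0 hn
      · exact ⟨n, rfl⟩
  -- RHS equals the sum of W
  have hmono : StrictMono fun k : ℕ => (k + 1) ^ 2 := by
    intro a b h
    exact Nat.pow_lt_pow_left (Nat.succ_lt_succ h) (by norm_num)
  have hR : ∑' k : ℕ, Real.exp (-((k : ℝ) + 1) ^ 2 * π * x) = ∑' N : ℕ, W N := by
    have hWk : ∀ k : ℕ, W ((k + 1) ^ 2) = Real.exp (-((k : ℝ) + 1) ^ 2 * π * x) := by
      intro k
      have hsq : IsSquare ((k + 1) ^ 2) := ⟨k + 1, by ring⟩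
      have hne : ((k + 1) ^ 2 : ℕ) ≠ 0 := by positivity
      simp only [hW_def, hsq, hne, and_true, if_true, ne_eq, not_false_eq_true]
      rw [hq_def, ← Real.exp_nat_mul]
      congr 1
      push_cast
      ring
    rw [← Function.Injective.tsum_eq hmono.injective (f := W) ?_]
    · exact tsum_congr fun k => (hWk k).symm
    · intro N hNs
      have hprop : IsSquare N ∧ N ≠ 0 := by
        by_contra hc
        simp [hW_def, hc] at hNs
      obtain ⟨⟨r, hr⟩, hN0⟩ := hprop
      have hr0 : r ≠ 0 := by rintro rfl; simp [hr] at hN0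
      refine ⟨r - 1, ?_⟩
      have h1 : r - 1 + 1 = r := Nat.succ_pred_eq_of_pos (Nat.pos_of_ne_zero hr0)
      show (r - 1 + 1) ^ 2 = N
      rw [h1, hr, sq]
  rw [hL, ← hTot, hR]
end

section
/- For complex x with |x| < 1, the Lambert series Σ_{n≥1} μ(n)·x^n/(1−x^n) equals x. -/
open ArithmeticFunction Function in
theorem moebius_lambert (x : ℂ) (hx : ‖x‖ < 1) :
    ∑' n : ℕ, (ArithmeticFunction.moebius n : ℂ) * x ^ n / (1 - x ^ n) = x := by
  classical
  set F : ℕ × ℕ → ℂ :=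
    fun p => if p.2 = 0 then 0 else (moebius p.1 : ℂ) * x ^ (p.1 * p.2) with hFdef
  have hr0 : (0:ℝ) ≤ ‖x‖ := norm_nonneg x
  have hxn : ∀ n : ℕ, n ≠ 0 → ‖x ^ n‖ < 1 := by
    intro n hn
    rw [norm_pow]
    exact lt_of_le_of_lt (pow_le_of_le_one hr0 hx.le hn) hx
  have hxne : ∀ n : ℕ, n ≠ 0 → (1 : ℂ) - x ^ n ≠ 0 := by
    intro n hn
    intro h
    have : x ^ n = 1 := by linear_combination -h
    have h2 := hxn n hn
    rw [this, norm_one] at h2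
    exact lt_irrefl 1 h2
  -- the real comparison function
  set G : ℕ × ℕ → ℝ :=
    fun p => if p.1 = 0 ∨ p.2 = 0 then 0 else ‖x‖ ^ (p.1 * p.2) with hGdef
  have hGnonneg : ∀ p, 0 ≤ G p := by
    intro p
    simp only [hGdef]
    split
    · exact le_refl 0
    · positivity
  -- rows of G
  have hGrow : ∀ n : ℕ, n ≠ 0 →
      (fun k => G (n, k)) = Function.update (fun k : ℕ => (‖x‖ ^ n) ^ k) 0 0 := by
    intro n hn
    funext k
    rcases eq_or_ne k 0 with rfl | hk
    · simp [hGdef, hn]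
    · simp [hGdef, hn, hk, Function.update_of_ne hk, ← pow_mul]
  have hGrowSummable : ∀ n : ℕ, Summable fun k => G (n, k) := by
    intro n
    rcases eq_or_ne n 0 with rfl | hn
    · exact summable_zero.congr (by intro k; simp [hGdef])
    · rw [hGrow n hn]
      exact (summable_geometric_of_lt_one (by positivity) (hxn n hn |>.trans_le' (by
        rw [norm_pow]))).update 0 0
  have hGrowHasSum : ∀ n : ℕ, n ≠ 0 →
      HasSum (fun k => G (n, k)) (0 - 1 + (1 - ‖x‖ ^ n)⁻¹) := by
    intro n hn
    rw [hGrow n hn]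
    have h1 : ‖x‖ ^ n < 1 := by
      have := hxn n hn; rwa [norm_pow] at this
    have := (hasSum_geometric_of_lt_one (by positivity) h1).update 0 0
    simpa using this
  have hGsummable : Summable G := by
    rw [summable_prod_of_nonneg hGnonneg]
    refine ⟨hGrowSummable, ?_⟩
    have hb : ∀ n : ℕ, ∑' k, G (n, k) ≤ (1 - ‖x‖)⁻¹ * ‖x‖ ^ n := by
      intro n
      rcases eq_or_ne n 0 with rfl | hn
      · have : (fun k => G (0, k)) = fun _ => (0:ℝ) := by funext k; simp [hGdef]
        rw [this, tsum_zero]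
        have h3 : (0:ℝ) < 1 - ‖x‖ := by linarith
        positivity
      · rw [(hGrowHasSum n hn).tsum_eq]
        have h1 : ‖x‖ ^ n < 1 := by
          have := hxn n hn; rwa [norm_pow] at this
        have h2 : ‖x‖ ^ n ≤ ‖x‖ := pow_le_of_le_one hr0 hx.le hn
        have h3 : (0:ℝ) < 1 - ‖x‖ := by linarith
        have h4 : (0:ℝ) < 1 - ‖x‖ ^ n := by linarith
        rw [zero_sub, neg_add_eq_sub]
        have h5 : (1 - ‖x‖ ^ n)⁻¹ - 1 = ‖x‖ ^ n * (1 - ‖x‖ ^ n)⁻¹ := by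
          linear_combination mul_inv_cancel₀ h4.ne'
        rw [h5]
        calc ‖x‖ ^ n * (1 - ‖x‖ ^ n)⁻¹ ≤ ‖x‖ ^ n * (1 - ‖x‖)⁻¹ := by
              apply mul_le_mul_of_nonneg_left _ (by positivity)
              exact inv_anti₀ h3 (by linarith)
          _ ≤ (1 - ‖x‖)⁻¹ * ‖x‖ ^ n := le_of_eq (mul_comm _ _)
    refine Summable.of_nonneg_of_le (fun n => tsum_nonneg fun k => hGnonneg _) hb ?_
    exact (summable_geometric_of_lt_one hr0 hx).mul_left _
  -- summability of F by comparison
  have hmub : ∀ n : ℕ, ‖(moebius n : ℂ)‖ ≤ 1 := by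
    intro n
    rcases moebius_eq_or n with h | h | h <;> simp [h]
  have hF : Summable F := by
    apply Summable.of_norm_bounded hGsummable
    intro ⟨n, k⟩
    rcases eq_or_ne k 0 with rfl | hk
    · simp [hFdef, hGdef]
    rcases eq_or_ne n 0 with rfl | hn
    · simp [hFdef, hGdef, hk]
    · simp only [hFdef, hGdef, hk, hn, if_neg (by tauto), or_self, if_false]
      rw [norm_mul, norm_pow]
      calc ‖(moebius n : ℂ)‖ * ‖x‖ ^ (n * k) ≤ 1 * ‖x‖ ^ (n * k) :=
            mul_le_mul_of_nonneg_right (hmub n) (by positivity)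
        _ = ‖x‖ ^ (n * k) := one_mul _
  -- rows of F
  have hrow : ∀ n : ℕ,
      HasSum (fun k => F (n, k)) ((moebius n : ℂ) * x ^ n / (1 - x ^ n)) := by
    intro n
    rcases eq_or_ne n 0 with rfl | hn
    · have h0 : (fun k => F (0, k)) = fun _ => (0:ℂ) := by
        funext k; simp [hFdef]
      rw [h0]
      simpa using hasSum_zero
    · have hgeo := (hasSum_geometric_of_norm_lt_one (hxn n hn)).mul_left (moebius n : ℂ)
      have hupd := hgeo.update 0 0
      have heq : Function.update (fun k : ℕ => (moebius n : ℂ) * (x ^ n) ^ k) 0 0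
          = fun k => F (n, k) := by
        funext k
        rcases eq_or_ne k 0 with rfl | hk
        · simp [hFdef]
        · simp [hFdef, hk, Function.update_of_ne hk, ← pow_mul]
      rw [heq] at hupd
      convert hupd using 1
      · rfl
      have h1 := hxne n hn
      field_simp
      ring
  -- first evaluation: the LHS equals the total sum of F
  have hL : HasSum (fun n : ℕ => (moebius n : ℂ) * x ^ n / (1 - x ^ n)) (∑' p, F p) :=
    hF.hasSum.prod_fiberwise hrow
  -- second evaluation: fiberwise over m = p.1 * p.2
  have hfib := hF.hasSum.tsum_fiberwise (fun p => p.1 * p.2)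
  have hfib_eq : (fun m : ℕ => ∑' p : (fun p : ℕ × ℕ => p.1 * p.2) ⁻¹' {m}, F p)
      = fun m => if m = 1 then x else 0 := by
    funext m
    rcases eq_or_ne m 0 with rfl | hm
    · rw [if_neg one_ne_zero.symm]
      have : ∀ p : (fun p : ℕ × ℕ => p.1 * p.2) ⁻¹' {0}, F p = 0 := by
        rintro ⟨⟨a, b⟩, hp⟩
        simp only [Set.mem_preimage, Set.mem_singleton_iff, Nat.mul_eq_zero] at hp
        rcases hp with rfl | rfl
        · simp [hFdef]
        · simp [hFdef]
      simp only [this, tsum_zero]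
    · have hset : (fun p : ℕ × ℕ => p.1 * p.2) ⁻¹' {m} = ↑(m.divisorsAntidiagonal) := by
        ext p
        simp [Nat.mem_divisorsAntidiagonal, hm, eq_comm]
      rw [hset, Finset.tsum_subtype' m.divisorsAntidiagonal F]
      have hterm : ∀ p ∈ m.divisorsAntidiagonal, F p = (moebius p.1 : ℂ) * x ^ m := by
        intro p hp
        obtain ⟨hpm, hm0⟩ := Nat.mem_divisorsAntidiagonal.mp hp
        have hp2 : p.2 ≠ 0 := by
          rintro h2
          exact hm0 (by rw [← hpm, h2, mul_zero])
        simp [hFdef, hp2, hpm]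
      rw [Finset.sum_congr rfl hterm, ← Finset.sum_mul]
      have hZ : (∑ d ∈ m.divisors, moebius d : ℤ) = if m = 1 then 1 else 0 := by
        have h1 : ((moebius * ArithmeticFunction.zeta : ArithmeticFunction ℤ)) m = (1 : ArithmeticFunction ℤ) m := by
          rw [moebius_mul_coe_zeta]
        rwa [coe_mul_zeta_apply, one_apply] at h1
      have hdiv : ∑ p ∈ m.divisorsAntidiagonal, (moebius p.1 : ℂ)
          = ((if m = 1 then 1 else 0 : ℤ) : ℂ) := by
        rw [Nat.sum_divisorsAntidiagonal (f := fun a b => (moebius a : ℂ)), ← hZ]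
        push_cast
        rfl
      rw [hdiv]
      rcases eq_or_ne m 1 with rfl | hm1
      · simp
      · simp [hm1]
  rw [hfib_eq] at hfib
  have hx' : HasSum (fun m : ℕ => if m = 1 then x else 0) x := hasSum_ite_eq 1 x
  have : ∑' p, F p = x := hfib.unique hx'
  rw [hL.tsum_eq, this]
end

section
/- For complex x with 0 < |x| < 1, Σ_{n≥1} μ(n)/(x^{−n} − 1) = x. -/
open ArithmeticFunction

theorem moebius_lambert_inv (x : ℂ) (hx0 : x ≠ 0) (hx : ‖x‖ < 1) :
    ∑' n : ℕ, (ArithmeticFunction.moebius n : ℂ) / (x ^ (-(n : ℤ)) - 1) = x := by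
  classical
  set F : ℕ × ℕ → ℂ :=
    fun p => if p.2 = 0 then 0 else (moebius p.1 : ℂ) * x ^ (p.1 * p.2) with hF
  have hmu : ∀ n : ℕ, ‖(moebius n : ℂ)‖ ≤ 1 := by
    intro n
    rcases moebius_eq_or n with h | h | h <;> simp [h]
  set r : ℝ := Real.sqrt ‖x‖ with hr
  have hr0 : 0 ≤ r := Real.sqrt_nonneg _
  have hr1 : r < 1 := by
    rw [hr]
    rw [show (1 : ℝ) = Real.sqrt 1 by simp]
    exact Real.sqrt_lt_sqrt (norm_nonneg x) hx
  have hrsq : r ^ 2 = ‖x‖ := Real.sq_sqrt (norm_nonneg x)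
  have hsum : Summable F := by
    apply Summable.of_norm_bounded (g := fun p : ℕ × ℕ => r ^ p.1 * r ^ p.2)
    · exact (summable_geometric_of_lt_one hr0 hr1).mul_of_nonneg
        (summable_geometric_of_lt_one hr0 hr1)
        (fun n => by positivity) (fun n => by positivity)
    · rintro ⟨n, k⟩
      rcases Nat.eq_zero_or_pos k with rfl | hk
      · simp only [hF, if_pos rfl, norm_zero]
        positivity
      · have hkk : k ≠ 0 := hk.ne'
        rcases Nat.eq_zero_or_pos n with rfl | hn
        · simp only [hF, if_neg hkk]
          simp only [ArithmeticFunction.map_zero, Int.cast_zero, zero_mul, norm_zero]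
          positivity
        · simp only [hF, if_neg hkk, norm_mul, norm_pow]
          calc ‖(moebius n : ℂ)‖ * ‖x‖ ^ (n * k) ≤ 1 * ‖x‖ ^ (n * k) := by
                gcongr
                exact hmu n
            _ = r ^ (2 * (n * k)) := by rw [one_mul, pow_mul r 2 (n * k), hrsq]
            _ ≤ r ^ (n + k) := by
                apply pow_le_pow_of_le_one hr0 hr1.le
                nlinarith [hn, hk]
            _ = r ^ n * r ^ k := pow_add r n k
  -- inner sums
  have hinner : ∀ n : ℕ,
      (moebius n : ℂ) / (x ^ (-(n : ℤ)) - 1) = ∑' k, F (n, k) := by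
    intro n
    rcases Nat.eq_zero_or_pos n with rfl | hn
    · have : ∀ k : ℕ, F (0, k) = 0 := by
        intro k
        rcases Nat.eq_zero_or_pos k with rfl | hk
        · simp [hF]
        · simp [hF, hk.ne']
      simp [this, tsum_zero]
    · set y : ℂ := x ^ n with hy
      have hyn : ‖y‖ < 1 := by
        rw [hy, norm_pow]
        exact pow_lt_one₀ (norm_nonneg x) hx hn.ne'
      have hy0 : y ≠ 0 := pow_ne_zero _ hx0
      have hy1 : (1 : ℂ) - y ≠ 0 := by
        intro h
        have : y = 1 := by linear_combination -h
        rw [this] at hyn; simp at hyn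
      have hsumn : Summable fun k => F (n, k) := hsum.prod_factor n
      rw [hsumn.tsum_eq_zero_add]
      have h0 : F (n, 0) = 0 := by simp [hF]
      have hsucc : ∀ k : ℕ, F (n, k + 1) = ((moebius n : ℂ) * y) * y ^ k := by
        intro k
        simp only [hF, if_neg (Nat.succ_ne_zero k), pow_mul, pow_succ']
        ring
      simp only [h0, hsucc, zero_add]
      rw [tsum_mul_left, tsum_geometric_of_norm_lt_one hyn]
      have hzx : x ^ (-(n : ℤ)) = y⁻¹ := by
        rw [zpow_neg, zpow_natCast, hy]
      rw [hzx]
      field_simp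
  -- fiberwise sums
  have hfib : ∀ m : ℕ,
      ∑' (p : (fun p : ℕ × ℕ => p.1 * p.2) ⁻¹' {m}), F p = if m = 1 then x else 0 := by
    intro m
    rcases Nat.eq_zero_or_pos m with rfl | hm
    · have : ∀ p : (fun p : ℕ × ℕ => p.1 * p.2) ⁻¹' {(0 : ℕ)}, F p = 0 := by
        rintro ⟨⟨a, b⟩, hp⟩
        simp only [Set.mem_preimage, Set.mem_singleton_iff, Nat.mul_eq_zero] at hp
        rcases hp with rfl | rfl
        · rcases Nat.eq_zero_or_pos b with rfl | hb
          · simp [hF]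
          · simp [hF, hb.ne']
        · simp [hF]
      simp [this]
    · have hm0 : m ≠ 0 := hm.ne'
      rw [show (fun p : ℕ × ℕ => p.1 * p.2) ⁻¹' {m} = ↑m.divisorsAntidiagonal by
          ext p; simp [Nat.mem_divisorsAntidiagonal, hm0, eq_comm],
        Finset.tsum_subtype' m.divisorsAntidiagonal F]
      have : ∀ p ∈ m.divisorsAntidiagonal, F p = (moebius p.1 : ℂ) * x ^ m := by
        rintro ⟨a, b⟩ hp
        rw [Nat.mem_divisorsAntidiagonal] at hp
        have hb : b ≠ 0 := by
          rintro rfl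
          exact hm0 (by simpa using hp.1.symm)
        simp only [hF, if_neg hb, hp.1]
      rw [Finset.sum_congr rfl this, ← Finset.sum_mul]
      have hsplit : ∑ p ∈ m.divisorsAntidiagonal, (moebius p.1 : ℂ)
          = ∑ d ∈ m.divisors, (moebius d : ℂ) :=
        Nat.sum_divisorsAntidiagonal (fun d _ => (moebius d : ℂ))
      have hmoeb : ∑ d ∈ m.divisors, ((moebius : ArithmeticFunction ℤ) d : ℂ)
          = if m = 1 then 1 else 0 := by
        have h1 := congrArg (fun f : ArithmeticFunction ℂ => f m)
          (coe_moebius_mul_coe_zeta (R := ℂ))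
        simp only [coe_mul_zeta_apply, one_apply] at h1
        simpa only [intCoe_apply] using h1
      rw [hsplit, hmoeb]
      split_ifs with h
      · subst h; simp
      · simp
  -- combine
  have hHS : HasSum (fun m : ℕ => if m = 1 then x else 0) (∑' p, F p) := by
    have := hsum.hasSum.tsum_fiberwise (fun p : ℕ × ℕ => p.1 * p.2)
    convert this using 1
    · rfl
    ext m
    exact (hfib m).symm
  have hval : ∑' p, F p = x := (hHS.unique (hasSum_ite_eq 1 x))
  calc ∑' n : ℕ, (moebius n : ℂ) / (x ^ (-(n : ℤ)) - 1)
      = ∑' (n : ℕ) (k : ℕ), F (n, k) := by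
        apply tsum_congr; intro n; exact hinner n
    _ = ∑' p, F p := (hsum.tsum_prod' fun n => hsum.prod_factor n).symm
    _ = x := hval
end

section
/- Σ_{n≥1} μ(n)/(2^n + 1) = 0. -/
open ArithmeticFunction

/-- Row sums: for each `n`, the geometric-type series in `k`. -/
lemma lambert_row (c x : ℝ) (hx0 : 0 ≤ x) (hx1 : x < 1) (n : ℕ) (hc : n = 0 → c = 0) :
    HasSum (fun k : ℕ => if k = 0 then 0 else c * x ^ (n * k))
      (c * x ^ n / (1 - x ^ n)) := by
  rcases Nat.eq_zero_or_pos n with rfl | hn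
  · have hc0 : c = 0 := hc rfl
    simp only [hc0, zero_mul, zero_div, ite_self]
    exact hasSum_zero
  · have hxn1 : x ^ n < 1 := by
      calc x ^ n ≤ x ^ 1 := pow_le_pow_of_le_one hx0 hx1.le hn
      _ = x := pow_one x
      _ < 1 := hx1
    have hxn0 : 0 ≤ x ^ n := pow_nonneg hx0 n
    have hne : 1 - x ^ n ≠ 0 := by linarith
    have hgeo : HasSum (fun k : ℕ => c * (x ^ n) ^ k) (c * (1 - x ^ n)⁻¹) :=
      (hasSum_geometric_of_lt_one hxn0 hxn1).mul_left c
    have hone : HasSum (fun k : ℕ => if k = 0 then c else 0) c := hasSum_ite_eq 0 c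
    have := hgeo.sub hone
    convert this using 1
    · rfl
    · funext k
      rcases eq_or_ne k 0 with rfl | hk
      · simp
      · simp [hk, pow_mul]
    · field_simp
      ring

/-- The Lambert series of the Möbius function: `∑ μ(n) xⁿ/(1-xⁿ) = x` for `0 ≤ x < 1`. -/
lemma lambert_moebius (x : ℝ) (hx0 : 0 ≤ x) (hx1 : x < 1) :
    HasSum (fun n : ℕ => (moebius n : ℝ) * x ^ n / (1 - x ^ n)) x := by
  set F : ℕ × ℕ → ℝ := fun p => if p.2 = 0 then 0 else (moebius p.1 : ℝ) * x ^ (p.1 * p.2)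
    with hF
  -- row sums
  have hrow : ∀ n : ℕ, HasSum (fun k => F (n, k)) ((moebius n : ℝ) * x ^ n / (1 - x ^ n)) :=
    fun n => lambert_row _ x hx0 hx1 n (by rintro rfl; simp)
  have hrowabs : ∀ n : ℕ, HasSum (fun k => |F (n, k)|)
      (|(moebius n : ℝ)| * x ^ n / (1 - x ^ n)) := by
    intro n
    have := lambert_row |(moebius n : ℝ)| x hx0 hx1 n (by rintro rfl; simp)
    convert this using 1
    funext k
    rcases eq_or_ne k 0 with rfl | hk
    · simp [hF]
    · simp only [hF, hk, if_neg hk, abs_mul, abs_pow, abs_of_nonneg hx0]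
      simp
  -- summability of |F|
  have habs : Summable (fun p : ℕ × ℕ => |F p|) := by
    rw [summable_prod_of_nonneg (fun p => abs_nonneg _)]
    refine ⟨fun n => (hrowabs n).summable, ?_⟩
    have hbound : ∀ n : ℕ, ∑' k, |F (n, k)| ≤ x ^ n * (1 / (1 - x)) := by
      intro n
      rw [(hrowabs n).tsum_eq]
      rcases Nat.eq_zero_or_pos n with rfl | hn
      · simp only [pow_zero, sub_self, div_zero, one_mul]
        have h1x : (0:ℝ) < 1 - x := by linarith
        positivity
      · have hxn1 : x ^ n ≤ x := by
          calc x ^ n ≤ x ^ 1 := pow_le_pow_of_le_one hx0 hx1.le hn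
          _ = x := pow_one x
        have h1 : (0:ℝ) < 1 - x := by linarith
        have h2 : (0:ℝ) < 1 - x ^ n := by linarith
        have hmu : |(moebius n : ℝ)| ≤ 1 := by
          have := abs_moebius_le_one (n := n)
          exact_mod_cast (by exact_mod_cast this : |(moebius n : ℝ)| ≤ (1:ℝ))
        rw [div_le_iff₀ h2]
        calc |(moebius n : ℝ)| * x ^ n ≤ 1 * x ^ n := by
              apply mul_le_mul_of_nonneg_right hmu (pow_nonneg hx0 n)
        _ = x ^ n := one_mul _
        _ ≤ x ^ n * ((1 / (1 - x)) * (1 - x ^ n)) := by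
              nth_rewrite 1 [← mul_one (x ^ n)]
              apply mul_le_mul_of_nonneg_left _ (pow_nonneg hx0 n)
              rw [one_div, ← div_eq_inv_mul, le_div_iff₀ h1, one_mul]
              linarith
        _ = x ^ n * (1 / (1 - x)) * (1 - x ^ n) := by ring
    apply Summable.of_nonneg_of_le (fun n => tsum_nonneg fun k => abs_nonneg _) hbound
    exact (summable_geometric_of_lt_one hx0 hx1).mul_right _
  have hsumF : Summable F := habs.of_abs
  have hA : HasSum F (∑' p, F p) := hsumF.hasSum
  -- fiberwise over products: fibers give divisor sums of μ, which vanish except at 1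
  have hfib := hA.tsum_fiberwise (fun p : ℕ × ℕ => p.1 * p.2)
  have hval : (fun m : ℕ => ∑' p : (fun p : ℕ × ℕ => p.1 * p.2) ⁻¹' {m}, F p)
      = fun m : ℕ => if m = 1 then x else 0 := by
    funext m
    rcases eq_or_ne m 0 with rfl | hm
    · have : ∀ p : (fun p : ℕ × ℕ => p.1 * p.2) ⁻¹' {0}, F p = 0 := by
        rintro ⟨⟨a, b⟩, hp⟩
        simp only [Set.mem_preimage, Set.mem_singleton_iff, Nat.mul_eq_zero] at hp
        rcases hp with rfl | rfl
        · simp [hF]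
        · simp [hF]
      simp only [this, tsum_zero]
      simp
    · rw [show (fun p : ℕ × ℕ => p.1 * p.2) ⁻¹' {m} = (m.divisorsAntidiagonal : Set (ℕ × ℕ))
          by ext p; simp [Nat.mem_divisorsAntidiagonal, hm, eq_comm],
        Finset.tsum_subtype' m.divisorsAntidiagonal F]
      have hsum : ∑ p ∈ m.divisorsAntidiagonal, F p
          = (∑ p ∈ m.divisorsAntidiagonal, (moebius p.1 : ℝ)) * x ^ m := by
        rw [Finset.sum_mul]
        refine Finset.sum_congr rfl fun p hp => ?_
        obtain ⟨h1, h2⟩ := Nat.ne_zero_of_mem_divisorsAntidiagonal hp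
        rw [hF]
        simp only [if_neg h2, (Nat.mem_divisorsAntidiagonal.mp hp).1]
      rw [hsum]
      have hmoe : (∑ p ∈ m.divisorsAntidiagonal, (moebius p.1 : ℝ))
          = if m = 1 then 1 else 0 := by
        have h := congrArg (fun f : ArithmeticFunction ℤ => f m) moebius_mul_coe_zeta
        simp only [mul_apply, one_apply] at h
        have h2 : (∑ p ∈ m.divisorsAntidiagonal, moebius p.1 : ℤ)
            = if m = 1 then 1 else 0 := by
          rw [← h]
          refine Finset.sum_congr rfl fun p hp => ?_
          obtain ⟨_, hb⟩ := Nat.ne_zero_of_mem_divisorsAntidiagonal hp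
          simp [natCoe_apply, zeta_apply, hb]
        calc (∑ p ∈ m.divisorsAntidiagonal, (moebius p.1 : ℝ))
            = ((∑ p ∈ m.divisorsAntidiagonal, moebius p.1 : ℤ) : ℝ) := by push_cast; ring
        _ = if m = 1 then 1 else 0 := by rw [h2]; split <;> norm_num
      rw [hmoe]
      split <;> simp_all
  rw [hval] at hfib
  have hx : HasSum (fun m : ℕ => if m = 1 then x else 0) x := hasSum_ite_eq 1 x
  have hAx : (∑' p, F p) = x := hfib.unique hx
  have hfin := hA.prod_fiberwise hrow
  rwa [hAx] at hfin

theorem moebius_two_sum :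
    ∑' n : ℕ, (ArithmeticFunction.moebius n : ℝ) / (2 ^ n + 1) = 0 := by
  have h2 := lambert_moebius (1/2) (by norm_num) (by norm_num)
  have h4 := lambert_moebius (1/4) (by norm_num) (by norm_num)
  have h := h2.sub (h4.mul_left 2)
  have heq : (fun n : ℕ => (moebius n : ℝ) * (1/2) ^ n / (1 - (1/2) ^ n)
      - 2 * ((moebius n : ℝ) * (1/4) ^ n / (1 - (1/4) ^ n)))
      = fun n : ℕ => (ArithmeticFunction.moebius n : ℝ) / (2 ^ n + 1) := by
    funext n
    rcases Nat.eq_zero_or_pos n with rfl | hn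
    · simp
    · have ha : (1:ℝ) < 2 ^ n := one_lt_pow₀ (by norm_num) hn.ne'
      have h2n : ((2:ℝ) ^ n) ≠ 0 := by positivity
      have h4n : ((4:ℝ) ^ n) ≠ 0 := by positivity
      have e2 : ((1:ℝ)/2) ^ n = 1 / 2 ^ n := by rw [div_pow, one_pow]
      have e4 : ((1:ℝ)/4) ^ n = 1 / 4 ^ n := by rw [div_pow, one_pow]
      have h4eq : (4:ℝ) ^ n = (2 ^ n) ^ 2 := by
        calc (4:ℝ) ^ n = (2 ^ 2) ^ n := by norm_num
        _ = 2 ^ (2 * n) := (pow_mul 2 2 n).symm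
        _ = 2 ^ (n * 2) := by rw [mul_comm]
        _ = (2 ^ n) ^ 2 := pow_mul 2 n 2
      have hne1 : (2:ℝ) ^ n - 1 ≠ 0 := by linarith
      have hne2 : (2:ℝ) ^ n + 1 ≠ 0 := by linarith
      have hne3 : (1:ℝ) - 1/2^n ≠ 0 := by
        rw [sub_ne_zero]
        intro hc
        rw [eq_div_iff h2n, one_mul] at hc
        linarith
      have hne4 : (1:ℝ) - 1/4^n ≠ 0 := by
        rw [sub_ne_zero]
        intro hc
        rw [eq_div_iff h4n, one_mul] at hc
        rw [h4eq] at hc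
        nlinarith
      rw [e2, e4, h4eq]
      have h0 : (2:ℝ) ^ n ≠ 0 := h2n
      have hq1 : ((2:ℝ) ^ n) ^ 2 - 1 ≠ 0 := by nlinarith
      have hne4' : (1:ℝ) - 1 / ((2:ℝ) ^ n) ^ 2 ≠ 0 := by
        rw [sub_ne_zero]
        intro hc
        rw [eq_div_iff (pow_ne_zero 2 h0), one_mul] at hc
        nlinarith
      field_simp
      ring
  rw [heq] at h
  have : (1:ℝ)/2 - 2 * (1/4) = 0 := by norm_num
  rw [this] at h
  exact h.tsum_eq
end

section
/- The limit as x → 1 from below (x real, 0 < x < 1) of Σ_{n≥1} μ(n)·x^n/(x^n + 1) equals −1. -/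
open Filter ArithmeticFunction Finset


lemma sumA (m : ℕ) :
    ∑ p ∈ m.divisorsAntidiagonal, (moebius p.1 : ℝ) = if m = 1 then 1 else 0 := by
  have h := congrArg (fun f : ArithmeticFunction ℝ => f m)
    (coe_moebius_mul_coe_zeta (R := ℝ))
  simp only [mul_apply, one_apply] at h
  rw [← h]
  refine Finset.sum_congr rfl fun p hp => ?_
  have h2 := (Nat.ne_zero_of_mem_divisorsAntidiagonal hp).2
  simp [natCoe_apply, zeta_apply, h2]

lemma sumB (m : ℕ) (hm : m ≠ 0) :
    ∑ p ∈ m.divisorsAntidiagonal, (moebius p.1 : ℝ) * (if 2 ∣ p.2 then 1 else 0)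
      = if m = 2 then 1 else 0 := by
  simp only [mul_ite, mul_one, mul_zero]
  rw [← Finset.sum_filter]
  by_cases h2 : 2 ∣ m
  · obtain ⟨t, rfl⟩ := h2
    have ht : t ≠ 0 := by rintro rfl; simp at hm
    have key : ∑ p ∈ (2 * t).divisorsAntidiagonal.filter (fun p => 2 ∣ p.2),
        (moebius p.1 : ℝ) = ∑ q ∈ t.divisorsAntidiagonal, (moebius q.1 : ℝ) := by
      refine Finset.sum_nbij' (fun p => (p.1, p.2 / 2)) (fun q => (q.1, 2 * q.2)) ?_ ?_ ?_ ?_ ?_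
      · rintro ⟨a, b⟩ hp
        simp only [Finset.mem_filter, Nat.mem_divisorsAntidiagonal] at hp ⊢
        obtain ⟨⟨hab, h0⟩, ⟨c, rfl⟩⟩ := hp
        rw [Nat.mul_div_cancel_left c (by norm_num : 0 < 2)]
        constructor
        · nlinarith [hab]
        · omega
      · rintro ⟨a, b⟩ hq
        simp only [Finset.mem_filter, Nat.mem_divisorsAntidiagonal] at hq ⊢
        obtain ⟨hab, h0⟩ := hq
        refine ⟨⟨by rw [← hab]; ring, by omega⟩, ⟨b, rfl⟩⟩
      · rintro ⟨a, b⟩ hp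
        simp only [Finset.mem_filter, Nat.mem_divisorsAntidiagonal] at hp
        obtain ⟨-, ⟨c, rfl⟩⟩ := hp
        simp [Nat.mul_div_cancel_left c (by norm_num : 0 < 2)]
      · rintro ⟨a, b⟩ hq
        simp [Nat.mul_div_cancel_left b (by norm_num : 0 < 2)]
      · intros; rfl
    rw [key, sumA t]
    have : 2 * t = 2 ↔ t = 1 := by omega
    simp [this]
  · have hempty : (m.divisorsAntidiagonal.filter (fun p => 2 ∣ p.2)) = ∅ := by
      ext ⟨a, b⟩
      simp only [Finset.mem_filter, Nat.mem_divisorsAntidiagonal, Finset.notMem_empty,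
        iff_false, not_and]
      rintro ⟨rfl, -⟩ hb
      exact h2 (Dvd.dvd.mul_left hb a)
    rw [hempty]
    have : m ≠ 2 := by rintro rfl; exact h2 ⟨1, rfl⟩
    simp [this]

noncomputable def Ssgn (k : ℕ) : ℝ := if k = 0 then 0 else (-1) ^ (k + 1)

lemma key {x : ℝ} (hx0 : 0 < x) (hx1 : x < 1) :
    ∑' n : ℕ, (moebius n : ℝ) * x ^ n / (x ^ n + 1) = x - 2 * x ^ 2 := by
  set G : ℕ × ℕ → ℝ := fun p => (moebius p.1 : ℝ) * Ssgn p.2 * x ^ (p.1 * p.2) with hGdef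
  -- summability of G
  have hxnorm : Summable (fun n : ℕ => ‖x ^ n‖) := by
    simpa [Real.norm_eq_abs, abs_of_nonneg (pow_nonneg hx0.le _)]
      using summable_geometric_of_lt_one hx0.le hx1
  have hmaj : Summable (fun p : ℕ × ℕ => x⁻¹ * (x ^ p.1 * x ^ p.2)) :=
    (summable_mul_of_summable_norm hxnorm hxnorm).mul_left _
  have hG : Summable G := by
    refine Summable.of_norm_bounded hmaj ?_
    rintro ⟨a, b⟩
    have hpos : 0 ≤ x⁻¹ * (x ^ a * x ^ b) := by positivity
    by_cases ha : a = 0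
    · simpa [hGdef, ha] using hpos
    by_cases hb : b = 0
    · simpa [hGdef, Ssgn, hb] using hpos
    have h1 : x ^ (a * b) ≤ x ^ (a + b - 1) := by
      refine pow_le_pow_of_le_one hx0.le hx1.le ?_
      have ha1 : 1 ≤ a := Nat.one_le_iff_ne_zero.mpr ha
      have hb1 : 1 ≤ b := Nat.one_le_iff_ne_zero.mpr hb
      have h : a + b ≤ a * b + 1 := by nlinarith
      omega
    have h2 : x ^ (a + b - 1) = x⁻¹ * (x ^ a * x ^ b) := by
      have : a + b - 1 + 1 = a + b := by omega
      rw [← pow_add] at *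
      field_simp
      rw [← pow_succ, this]
    have hS : ‖Ssgn b‖ ≤ 1 := by
      simp [Ssgn, hb, Real.norm_eq_abs, abs_pow]
    have hmu : ‖(moebius a : ℝ)‖ ≤ 1 := by
      rw [Real.norm_eq_abs, ← Int.cast_abs]
      exact_mod_cast abs_moebius_le_one
    calc ‖G (a, b)‖ = ‖(moebius a : ℝ)‖ * ‖Ssgn b‖ * ‖x ^ (a * b)‖ := by
          simp [hGdef, norm_mul]
      _ ≤ 1 * 1 * x ^ (a * b) := by
          have hxn : ‖x ^ (a * b)‖ = x ^ (a * b) := by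
            rw [Real.norm_eq_abs, abs_of_nonneg (by positivity)]
          rw [hxn]
          gcongr
      _ = x ^ (a * b) := by ring
      _ ≤ x ^ (a + b - 1) := h1
      _ = _ := h2
  -- row sums
  have hrow : ∀ n : ℕ, HasSum (fun k => G (n, k)) ((moebius n : ℝ) * x ^ n / (x ^ n + 1)) := by
    intro n
    rcases eq_or_ne n 0 with rfl | hn
    · simpa [hGdef] using (hasSum_zero : HasSum (fun _ : ℕ => (0:ℝ)) 0)
    · have hy0 : 0 < x ^ n := pow_pos hx0 n
      have hy1 : x ^ n < 1 := pow_lt_one₀ hx0.le hx1 hn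
      have hgeo : HasSum (fun j : ℕ => (-(x ^ n)) ^ j) (1 - -(x ^ n))⁻¹ :=
        hasSum_geometric_of_norm_lt_one (by
          rw [norm_neg, Real.norm_eq_abs, abs_of_pos hy0]; exact hy1)
      have h1 : HasSum (fun j : ℕ => G (n, j + 1))
          ((moebius n : ℝ) * x ^ n * (1 - -(x ^ n))⁻¹) := by
        have h2 := hgeo.mul_left ((moebius n : ℝ) * x ^ n)
        have hfun : (fun j : ℕ => G (n, j + 1))
            = fun j : ℕ => (moebius n : ℝ) * x ^ n * (-(x ^ n)) ^ j := by
          funext j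
          simp only [hGdef, Ssgn, Nat.succ_ne_zero, if_false]
          rw [pow_mul, neg_pow, pow_succ, pow_succ]
          ring
        rw [hfun]
        exact h2
      have h3 := (hasSum_nat_add_iff (f := fun k => G (n, k)) 1).mp h1
      have hz : ∑ i ∈ Finset.range 1, G (n, i) = 0 := by
        simp [hGdef, Ssgn]
      rw [hz, add_zero] at h3
      convert h3 using 1
      all_goals try rfl
      rw [sub_neg_eq_add, div_eq_mul_inv]
      ring_nf
  -- the sum of the left-hand series equals the double sum
  have hL : HasSum (fun n : ℕ => (moebius n : ℝ) * x ^ n / (x ^ n + 1)) (∑' p, G p) :=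
    hG.hasSum.prod_fiberwise hrow
  -- fiberwise sums over p.1 * p.2 = m
  set d : ℕ → ℝ := fun m => if m = 1 then x else if m = 2 then -(2 * x ^ 2) else 0 with hddef
  have hfib := hG.hasSum.tsum_fiberwise (fun p : ℕ × ℕ => p.1 * p.2)
  have hfibval : (fun m : ℕ => ∑' p : (fun p : ℕ × ℕ => p.1 * p.2) ⁻¹' {m}, G p) = d := by
    funext m
    rcases eq_or_ne m 0 with rfl | hm
    · have hz : ∀ p : (fun p : ℕ × ℕ => p.1 * p.2) ⁻¹' {(0:ℕ)}, G p = 0 := by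
        rintro ⟨⟨a, b⟩, hp⟩
        simp only [Set.mem_preimage, Set.mem_singleton_iff, Nat.mul_eq_zero] at hp
        rcases hp with rfl | rfl <;> simp [hGdef, Ssgn]
      simp only [hz, tsum_zero, hddef]
      norm_num
    · have hset : (fun p : ℕ × ℕ => p.1 * p.2) ⁻¹' {m} = ↑(m.divisorsAntidiagonal) := by
        ext p
        simp [Nat.mem_divisorsAntidiagonal, hm]
      rw [hset, Finset.tsum_subtype' m.divisorsAntidiagonal G]
      have hterm : ∀ p ∈ m.divisorsAntidiagonal,
          G p = ((moebius p.1 : ℝ) * 1 - 2 * ((moebius p.1 : ℝ) * (if 2 ∣ p.2 then 1 else 0)))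
            * x ^ m := by
        rintro ⟨a, b⟩ hp
        obtain ⟨hab, -⟩ := Nat.mem_divisorsAntidiagonal.mp hp
        have hb : b ≠ 0 := (Nat.ne_zero_of_mem_divisorsAntidiagonal hp).2
        have hSval : Ssgn b = 1 - 2 * (if 2 ∣ b then 1 else 0) := by
          rcases Nat.even_or_odd b with he | ho
          · have : (2:ℕ) ∣ b := he.two_dvd
            simp only [Ssgn, hb, if_false, this, if_true]
            have : Odd (b + 1) := Even.add_one he
            rw [this.neg_one_pow]
            norm_num
          · have : ¬ (2:ℕ) ∣ b := by
              have h' := Nat.odd_iff.mp ho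
              omega
            simp only [Ssgn, hb, if_false, this, if_true]
            have : Even (b + 1) := Odd.add_one ho
            rw [this.neg_one_pow]
            norm_num
        simp only [hGdef, hab, hSval]
        ring
      rw [Finset.sum_congr rfl hterm, ← Finset.sum_mul, Finset.sum_sub_distrib,
        ← Finset.mul_sum]
      simp only [mul_one]
      rw [sumA m, sumB m hm]
      rcases eq_or_ne m 1 with rfl | h1
      · simp [hddef]
      rcases eq_or_ne m 2 with rfl | h2
      · norm_num [hddef]
      · simp [hddef, h1, h2]
  rw [hfibval] at hfib
  have hd2 : HasSum d (x - 2 * x ^ 2) := by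
    have hsupp : ∀ m : ℕ, m ∉ ({1, 2} : Finset ℕ) → d m = 0 := by
      intro m hmem
      simp only [Finset.mem_insert, Finset.mem_singleton, not_or] at hmem
      simp [hddef, hmem.1, hmem.2]
    have := hasSum_sum_of_ne_finset_zero (L := SummationFilter.unconditional ℕ) hsupp
    convert this using 1
    norm_num [hddef]
    ring
  rw [hL.tsum_eq, hfib.unique hd2]


theorem moebius_limit :
    Tendsto (fun x : ℝ => ∑' n : ℕ,
        (ArithmeticFunction.moebius n : ℝ) * x ^ n / (x ^ n + 1))
      (nhdsWithin 1 (Set.Ioo 0 1)) (nhds (-1)) := by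
  have hpoly : Tendsto (fun x : ℝ => x - 2 * x ^ 2) (nhdsWithin 1 (Set.Ioo 0 1)) (nhds (-1)) := by
    have h1 : Tendsto (fun x : ℝ => x - 2 * x ^ 2) (nhds 1) (nhds ((1:ℝ) - 2 * 1 ^ 2)) :=
      Continuous.tendsto (by continuity) 1
    norm_num at h1
    exact h1.mono_left nhdsWithin_le_nhds
  refine hpoly.congr' ?_
  filter_upwards [self_mem_nhdsWithin] with x hx
  exact (key hx.1 hx.2).symm
end
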